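/- Let L : [0,1] → [0,1] satisfy L(s) = ∫_s^1 (1/w)(1 − e^{−L(1−w)}) dw for all s ∈ [0,1) with L(1) = 0, and define η(w) := (1−w)·e^{L(1−w)} + w·e^{−L(w)} − 1 for w ∈ [0,1]. Then η(0) = η(1) = 0, η is differentiable on (0,1) with η′(w) = e^{−L(w)}·[2 − (e^{L(1−w)} + e^{−L(1−w)})] ≤ 0 for all w ∈ (0,1), and consequently η ≡ 0 on [0,1]. -/

import Mathlib

open MeasureTheory Real Set Filter

/-- The function `η(w) := (1−w)·e^{L(1−w)} + w·e^{−L(w)} − 1`. -/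
noncomputable def eta (L : ℝ → ℝ) (w : ℝ) : ℝ :=
  (1 - w) * Real.exp (L (1 - w)) + w * Real.exp (-(L w)) - 1

/-- the integrand -/
noncomputable def ff (L : ℝ → ℝ) (w : ℝ) : ℝ := (1 / w) * (1 - Real.exp (-(L (1 - w))))

section Aux
variable {L : ℝ → ℝ}

lemma ff_bounds (hmap : ∀ s ∈ Set.Icc (0:ℝ) 1, L s ∈ Set.Icc (0:ℝ) 1) {w : ℝ}
    (hw : w ∈ Set.Ioc (0:ℝ) 1) : 0 ≤ ff L w ∧ ff L w ≤ 1 / w := by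
  have h1w : (1 - w) ∈ Set.Icc (0:ℝ) 1 := ⟨by linarith [hw.2], by linarith [hw.1]⟩
  have hLm := hmap _ h1w
  have he1 : Real.exp (-(L (1-w))) ≤ 1 := Real.exp_le_one_iff.mpr (by linarith [hLm.1])
  have he0 : 0 < Real.exp (-(L (1-w))) := Real.exp_pos _
  have hwpos : 0 < 1 / w := by have := hw.1; positivity
  constructor
  · exact mul_nonneg hwpos.le (by linarith)
  · have : (1 : ℝ) - Real.exp (-(L (1-w))) ≤ 1 := by linarith
    calc ff L w ≤ (1/w) * 1 := by
          exact mul_le_mul_of_nonneg_left this hwpos.le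
      _ = 1 / w := mul_one _

lemma ff_integrable (hmap : ∀ s ∈ Set.Icc (0:ℝ) 1, L s ∈ Set.Icc (0:ℝ) 1)
    (hL : ∀ s ∈ Set.Ico (0:ℝ) 1,
      L s = ∫ w in Set.Ioc s 1, (1 / w) * (1 - Real.exp (-(L (1 - w)))))
    (hL1 : L 1 = 0) :
    ∀ s ∈ Set.Ioo (0:ℝ) 1, IntegrableOn (ff L) (Set.Ioc s 1) := by
  have hLeq : ∀ s ∈ Set.Ico (0:ℝ) 1, L s = ∫ w in Set.Ioc s 1, ff L w := hL
  set A : Set ℝ := {t | t ∈ Set.Icc (0:ℝ) 1 ∧ IntegrableOn (ff L) (Set.Ioc t 1)} with hA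
  have h1A : (1:ℝ) ∈ A := ⟨⟨zero_le_one, le_refl 1⟩, by simp [IntegrableOn]⟩
  have hup : ∀ t ∈ A, ∀ u, t ≤ u → u ≤ 1 → u ∈ A := fun t ht u htu hu1 =>
    ⟨⟨le_trans ht.1.1 htu, hu1⟩, ht.2.mono_set (Set.Ioc_subset_Ioc_left htu)⟩
  have hbdd : BddBelow A := ⟨0, fun t ht => ht.1.1⟩
  have hne : A.Nonempty := ⟨1, h1A⟩
  set σ := sInf A with hσ
  have hσ0 : 0 ≤ σ := le_csInf hne (fun t ht => ht.1.1)
  have hσ1 : σ ≤ 1 := csInf_le hbdd h1A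
  have hmem : ∀ t, σ < t → t ≤ 1 → t ∈ A := by
    intro t ht ht1
    obtain ⟨a, haA, hat⟩ := exists_lt_of_csInf_lt hne ht
    exact hup a haA t hat.le ht1
  suffices hσz : σ = 0 by
    intro s hs
    exact (hmem s (by rw [hσz]; exact hs.1) hs.2.le).2
  by_contra hσne
  have hσpos : 0 < σ := lt_of_le_of_ne hσ0 (Ne.symm hσne)
  -- (ii) L = 0 on [0, σ)
  have hL0 : ∀ s, 0 ≤ s → s < σ → L s = 0 := by
    intro s hs0 hsσ
    have hnotA : s ∉ A := fun hsA => absurd (csInf_le hbdd hsA) (not_le.mpr hsσ)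
    have hnotInt : ¬ IntegrableOn (ff L) (Set.Ioc s 1) := fun h =>
      hnotA ⟨⟨hs0, by linarith⟩, h⟩
    rw [hLeq s ⟨hs0, by linarith⟩]
    exact integral_undef hnotInt
  -- (iii) σ ≤ 1/2
  have hσhalf : σ ≤ 1/2 := by
    by_contra hgt
    push_neg at hgt
    have hzero : ∀ w ∈ Set.Ioc (1/2 : ℝ) 1, ff L w = 0 := by
      intro w hw
      have : L (1 - w) = 0 := hL0 _ (by linarith [hw.2]) (by linarith [hw.1])
      simp [ff, this]
    have hint : IntegrableOn (ff L) (Set.Ioc (1/2:ℝ) 1) := by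
      refine (integrableOn_congr_fun (fun w hw => (hzero w hw).symm) measurableSet_Ioc).mp ?_
      exact integrableOn_zero
    have : (1/2 : ℝ) ∈ A := ⟨⟨by norm_num, by norm_num⟩, hint⟩
    exact absurd (csInf_le hbdd this) (not_le.mpr hgt)
  -- (iv) L = 0 on [1-σ, 1]
  have hL0' : ∀ s, 1 - σ ≤ s → s ≤ 1 → L s = 0 := by
    intro s hsl hsu
    rcases eq_or_lt_of_le hsu with h | h
    · rw [h]; exact hL1
    · rw [hLeq s ⟨by linarith, h⟩]
      have hzero : ∀ w ∈ Set.Ioc s 1, ff L w = 0 := by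
        intro w hw
        have : L (1 - w) = 0 := hL0 _ (by linarith [hw.2]) (by linarith [hw.1])
        simp [ff, this]
      rw [setIntegral_congr_fun measurableSet_Ioc hzero]
      simp
  -- (v) ff = 0 on (0, σ]
  have hff0 : ∀ w, 0 < w → w ≤ σ → ff L w = 0 := by
    intro w hw0 hwσ
    have : L (1 - w) = 0 := hL0' _ (by linarith) (by linarith)
    simp [ff, this]
  -- (i) σ ∈ A
  have hσA : σ ∈ A := by
    refine ⟨⟨hσ0, hσ1⟩, ?_⟩
    have hσlt1 : σ < 1 := by linarith
    -- union decomposition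
    have hU : Set.Ioc σ 1 = ⋃ n : ℕ, Set.Ioc (σ + (1-σ)/(n+1)) 1 := by
      ext w
      simp only [Set.mem_Ioc, Set.mem_iUnion]
      constructor
      · rintro ⟨hw1, hw2⟩
        obtain ⟨n, hn⟩ := exists_nat_gt ((1-σ)/(w-σ))
        refine ⟨n, ?_, hw2⟩
        have hwσ : 0 < w - σ := by linarith
        have h1σ : 0 < 1 - σ := by linarith
        have hn1 : (1-σ)/(w-σ) < n + 1 := by linarith
        have : (1-σ)/(n+1) < w - σ := by
          rw [div_lt_iff₀ (by positivity)]
          rw [div_lt_iff₀ hwσ] at hn1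
          linarith
        linarith
      · rintro ⟨n, hn1, hn2⟩
        have : 0 < (1-σ)/(n+1:ℝ) := div_pos (by linarith) (by positivity)
        exact ⟨by linarith, hn2⟩
    have hmeas : AEStronglyMeasurable (ff L) (volume.restrict (Set.Ioc σ 1)) := by
      rw [hU, aestronglyMeasurable_iUnion_iff]
      intro n
      have hpos : 0 < (1-σ)/(n+1:ℝ) := div_pos (by linarith) (by positivity)
      rcases le_or_gt (σ + (1-σ)/(n+1)) 1 with h | h
      · exact (hmem _ (by linarith) h).2.aestronglyMeasurable
      · have : Set.Ioc (σ + (1-σ)/(n+1)) 1 = ∅ := Set.Ioc_eq_empty (by linarith)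
        rw [this]
        simp
    refine ⟨hmeas, HasFiniteIntegral.restrict_of_bounded (C := 1/σ) ?_ ?_⟩
    · rw [Real.volume_Ioc]; exact ENNReal.ofReal_lt_top
    · filter_upwards [ae_restrict_mem measurableSet_Ioc] with w hw
      have hw' : w ∈ Set.Ioc (0:ℝ) 1 := ⟨lt_trans hσpos hw.1, hw.2⟩
      obtain ⟨hge, hle⟩ := ff_bounds hmap hw'
      rw [Real.norm_eq_abs, abs_of_nonneg hge]
      calc ff L w ≤ 1/w := hle
        _ ≤ 1/σ := by
            apply one_div_le_one_div_of_le hσpos hw.1.le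
  -- (vi) contradiction
  have hhalf : σ/2 ∈ A := by
    refine ⟨⟨by linarith, by linarith⟩, ?_⟩
    have hunion : Set.Ioc (σ/2) σ ∪ Set.Ioc σ 1 = Set.Ioc (σ/2) 1 :=
      Set.Ioc_union_Ioc_eq_Ioc (by linarith) hσ1
    rw [← hunion]
    refine MeasureTheory.IntegrableOn.union ?_ hσA.2
    refine (integrableOn_congr_fun (fun w hw => (hff0 w (by linarith [hw.1]) hw.2).symm)
      measurableSet_Ioc).mp integrableOn_zero
  have := csInf_le hbdd hhalf
  linarith

lemma L_eq_interval (hL : ∀ s ∈ Set.Ico (0:ℝ) 1,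
      L s = ∫ w in Set.Ioc s 1, (1 / w) * (1 - Real.exp (-(L (1 - w)))))
    (hL1 : L 1 = 0) :
    ∀ s ∈ Set.Icc (0:ℝ) 1, L s = ∫ t in s..1, ff L t := by
  intro s hs
  rcases eq_or_lt_of_le hs.2 with h | h
  · rw [h, intervalIntegral.integral_same, hL1]
  · rw [intervalIntegral.integral_of_le hs.2]
    exact hL s ⟨hs.1, h⟩

lemma L_eq_sub (hL : ∀ s ∈ Set.Ico (0:ℝ) 1,
      L s = ∫ w in Set.Ioc s 1, (1 / w) * (1 - Real.exp (-(L (1 - w)))))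
    (hL1 : L 1 = 0) {a : ℝ} (ha : 0 < a) (hInt : IntegrableOn (ff L) (Set.Ioc a 1)) :
    ∀ s ∈ Set.Icc a 1, L s = (∫ t in a..1, ff L t) - ∫ t in a..s, ff L t := by
  intro s hs
  have ha1 : a ≤ 1 := le_trans hs.1 hs.2
  have hii : ∀ u v, a ≤ u → u ≤ v → v ≤ 1 → IntervalIntegrable (ff L) volume u v := by
    intro u v hu huv hv
    rw [intervalIntegrable_iff_integrableOn_Ioc_of_le huv]
    exact hInt.mono_set (Set.Ioc_subset_Ioc hu hv)
  have hadd : (∫ t in a..s, ff L t) + (∫ t in s..1, ff L t) = ∫ t in a..1, ff L t :=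
    intervalIntegral.integral_add_adjacent_intervals (hii a s (le_refl a) hs.1 hs.2)
      (hii s 1 hs.1 hs.2 (le_refl 1))
  rw [L_eq_interval hL hL1 s ⟨le_trans ha.le hs.1, hs.2⟩]
  linarith

lemma L_contAt (hmap : ∀ s ∈ Set.Icc (0:ℝ) 1, L s ∈ Set.Icc (0:ℝ) 1)
    (hL : ∀ s ∈ Set.Ico (0:ℝ) 1,
      L s = ∫ w in Set.Ioc s 1, (1 / w) * (1 - Real.exp (-(L (1 - w)))))
    (hL1 : L 1 = 0) :
    ∀ s ∈ Set.Ioo (0:ℝ) 1, ContinuousAt L s := by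
  intro s hs
  set a := s/2 with ha
  have ha0 : 0 < a := by simp [ha]; linarith [hs.1]
  have has : a < s := by simp [ha]; linarith [hs.1]
  have hInt : IntegrableOn (ff L) (Set.Ioc a 1) :=
    ff_integrable hmap hL hL1 a ⟨ha0, by linarith [hs.2]⟩
  have hprim : ContinuousOn (fun x => ∫ t in a..x, ff L t) (Set.Icc a 1) := by
    have h1 : Set.uIcc a 1 = Set.Icc a 1 := Set.uIcc_of_le (by linarith [hs.2])
    have h2 : IntegrableOn (ff L) (Set.Icc a 1) :=
      (integrableOn_Icc_iff_integrableOn_Ioc).mpr hInt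
    have := intervalIntegral.continuousOn_primitive_interval (a := a) (b := 1)
      (μ := volume) (f := ff L) (h1 ▸ h2)
    rwa [h1] at this
  have hnbhd : Set.Ioo a 1 ∈ nhds s := Ioo_mem_nhds has hs.2
  have heq : L =ᶠ[nhds s] (fun x => (∫ t in a..1, ff L t) - ∫ t in a..x, ff L t) := by
    filter_upwards [hnbhd] with x hx
    exact L_eq_sub hL hL1 ha0 hInt x ⟨hx.1.le, hx.2.le⟩
  have hca : ContinuousAt (fun x => (∫ t in a..1, ff L t) - ∫ t in a..x, ff L t) s := by
    refine continuousAt_const.sub ?_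
    exact (hprim.continuousAt (Icc_mem_nhds has hs.2))
  exact hca.congr heq.symm

lemma ff_contAt (hmap : ∀ s ∈ Set.Icc (0:ℝ) 1, L s ∈ Set.Icc (0:ℝ) 1)
    (hL : ∀ s ∈ Set.Ico (0:ℝ) 1,
      L s = ∫ w in Set.Ioc s 1, (1 / w) * (1 - Real.exp (-(L (1 - w)))))
    (hL1 : L 1 = 0) :
    ∀ s ∈ Set.Ioo (0:ℝ) 1, ContinuousAt (ff L) s := by
  intro s hs
  have h1s : (1 - s) ∈ Set.Ioo (0:ℝ) 1 := ⟨by linarith [hs.2], by linarith [hs.1]⟩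
  have hLc : ContinuousAt L (1 - s) := L_contAt hmap hL hL1 _ h1s
  have hc1 : ContinuousAt (fun w : ℝ => 1 - w) s := (continuous_const.sub continuous_id).continuousAt
  have hc2 : ContinuousAt (fun w : ℝ => L (1 - w)) s := hLc.comp hc1
  have hc3 : ContinuousAt (fun w : ℝ => Real.exp (-(L (1 - w)))) s :=
    Real.continuous_exp.continuousAt.comp hc2.neg
  exact (continuousAt_const.div continuousAt_id (ne_of_gt hs.1)).mul
    (continuousAt_const.sub hc3)

lemma L_hasDeriv (hmap : ∀ s ∈ Set.Icc (0:ℝ) 1, L s ∈ Set.Icc (0:ℝ) 1)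
    (hL : ∀ s ∈ Set.Ico (0:ℝ) 1,
      L s = ∫ w in Set.Ioc s 1, (1 / w) * (1 - Real.exp (-(L (1 - w)))))
    (hL1 : L 1 = 0) :
    ∀ s ∈ Set.Ioo (0:ℝ) 1, HasDerivAt L (-(ff L s)) s := by
  intro s hs
  set a := s/2 with ha
  have ha0 : 0 < a := by simp [ha]; linarith [hs.1]
  have has : a < s := by simp [ha]; linarith [hs.1]
  have hInt : IntegrableOn (ff L) (Set.Ioc a 1) :=
    ff_integrable hmap hL hL1 a ⟨ha0, by linarith [hs.2]⟩
  have hii : IntervalIntegrable (ff L) volume a s := by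
    rw [intervalIntegrable_iff_integrableOn_Ioc_of_le has.le]
    exact hInt.mono_set (Set.Ioc_subset_Ioc (le_refl a) hs.2.le)
  have hmeas : StronglyMeasurableAtFilter (ff L) (nhds s) volume :=
    ContinuousAt.stronglyMeasurableAtFilter isOpen_Ioo (ff_contAt hmap hL hL1) s hs
  have hd : HasDerivAt (fun u => ∫ t in a..u, ff L t) (ff L s) s :=
    intervalIntegral.integral_hasDerivAt_right hii hmeas (ff_contAt hmap hL hL1 s hs)
  have hd2 : HasDerivAt (fun x => (∫ t in a..1, ff L t) - ∫ t in a..x, ff L t) (-(ff L s)) s := by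
    simpa using (hd.const_sub (∫ t in a..1, ff L t))
  refine hd2.congr_of_eventuallyEq ?_
  filter_upwards [Ioo_mem_nhds has hs.2] with x hx
  exact L_eq_sub hL hL1 ha0 hInt x ⟨hx.1.le, hx.2.le⟩

lemma L_tendsto_one (hmap : ∀ s ∈ Set.Icc (0:ℝ) 1, L s ∈ Set.Icc (0:ℝ) 1)
    (hL : ∀ s ∈ Set.Ico (0:ℝ) 1,
      L s = ∫ w in Set.Ioc s 1, (1 / w) * (1 - Real.exp (-(L (1 - w)))))
    (hL1 : L 1 = 0) :
    Tendsto L (nhdsWithin 1 (Set.Icc (0:ℝ) 1)) (nhds 0) := by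
  have hbound : ∀ s, 1/2 < s → s ≤ 1 → L s ≤ 2 * (1 - s) := by
    intro s hs hs1
    rcases eq_or_lt_of_le hs1 with h | h
    · rw [h, hL1]; norm_num
    · have hInt : IntegrableOn (ff L) (Set.Ioc s 1) :=
        ff_integrable hmap hL hL1 s ⟨by linarith, h⟩
      have hle : ∀ w ∈ Set.Ioc s 1, ff L w ≤ 2 := by
        intro w hw
        have hw' : w ∈ Set.Ioc (0:ℝ) 1 := ⟨by linarith [hw.1], hw.2⟩
        calc ff L w ≤ 1/w := (ff_bounds hmap hw').2
          _ ≤ 2 := by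
            rw [div_le_iff₀ (by linarith [hw.1])]
            linarith [hw.1]
      calc L s = ∫ w in Set.Ioc s 1, ff L w := hL s ⟨by linarith, h⟩
        _ ≤ ∫ _w in Set.Ioc s 1, (2:ℝ) :=
            setIntegral_mono_on hInt (integrableOn_const (by
              rw [Real.volume_Ioc]; exact ENNReal.ofReal_ne_top)) measurableSet_Ioc hle
        _ = 2 * (1 - s) := by
            rw [setIntegral_const, Real.volume_real_Ioc_of_le (by linarith),
              smul_eq_mul]
            ring
  apply squeeze_zero'
  · filter_upwards [self_mem_nhdsWithin] with s hs
    exact (hmap s hs).1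
  · filter_upwards [self_mem_nhdsWithin,
      nhdsWithin_le_nhds (Ioi_mem_nhds (by norm_num : (1/2:ℝ) < 1))] with s hs hs'
    exact hbound s hs' hs.2
  · have : Tendsto (fun s : ℝ => 2 * (1 - s)) (nhds 1) (nhds (2 * (1 - 1))) := by
      exact (tendsto_const_nhds.mul (tendsto_const_nhds.sub tendsto_id))
    simpa using this.mono_left nhdsWithin_le_nhds

end Aux

section Main
variable {L : ℝ → ℝ}

lemma eta_hasDeriv (hmap : ∀ s ∈ Set.Icc (0:ℝ) 1, L s ∈ Set.Icc (0:ℝ) 1)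
    (hL : ∀ s ∈ Set.Ico (0:ℝ) 1,
      L s = ∫ w in Set.Ioc s 1, (1 / w) * (1 - Real.exp (-(L (1 - w)))))
    (hL1 : L 1 = 0) :
    ∀ w ∈ Set.Ioo (0:ℝ) 1,
      HasDerivAt (fun x => (1 - x) * Real.exp (L (1 - x)) + x * Real.exp (-(L x)) - 1)
        (Real.exp (-(L w)) *
          (2 - (Real.exp (L (1 - w)) + Real.exp (-(L (1 - w)))))) w := by
  intro w hw
  have hw' : (1 - w) ∈ Set.Ioo (0:ℝ) 1 := ⟨by linarith [hw.2], by linarith [hw.1]⟩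
  have hdL : HasDerivAt L (-(ff L w)) w := L_hasDeriv hmap hL hL1 w hw
  have hdL' : HasDerivAt L (-(ff L (1 - w))) (1 - w) := L_hasDeriv hmap hL hL1 _ hw'
  have hlin : HasDerivAt (fun x : ℝ => 1 - x) (-1) w := by
    simpa using (hasDerivAt_id w).const_sub 1
  have h1 : HasDerivAt (fun x => L (1 - x)) (ff L (1 - w)) w := by
    have := hdL'.comp w hlin
    simpa [Function.comp_def] using this
  have hA : HasDerivAt (fun x => (1 - x) * Real.exp (L (1 - x)))
      ((-1) * Real.exp (L (1 - w)) + (1 - w) * (Real.exp (L (1 - w)) * ff L (1 - w))) w :=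
    hlin.mul h1.exp
  have hB : HasDerivAt (fun x => x * Real.exp (-(L x)))
      (1 * Real.exp (-(L w)) + w * (Real.exp (-(L w)) * (ff L w))) w := by
    have hexp : HasDerivAt (fun x => Real.exp (-(L x))) (Real.exp (-(L w)) * (ff L w)) w := by
      simpa using hdL.neg.exp
    exact ((hasDerivAt_id' w).mul hexp).congr_deriv (by ring)
  have htot := (hA.add hB).sub_const 1
  refine htot.congr_deriv ?_
  have hw0 : w ≠ 0 := ne_of_gt hw.1
  have hw1 : (1:ℝ) - w ≠ 0 := sub_ne_zero.mpr (ne_of_lt hw.2).symm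
  have hffw : ff L w = (1 / w) * (1 - Real.exp (-(L (1 - w)))) := rfl
  have hffw' : ff L (1 - w) = (1 / (1 - w)) * (1 - Real.exp (-(L w))) := by
    simp [ff]
  rw [hffw, hffw']
  field_simp
  ring

theorem stmt11_aux (L : ℝ → ℝ) (hmap : ∀ s ∈ Set.Icc (0:ℝ) 1, L s ∈ Set.Icc (0:ℝ) 1)
    (hL : ∀ s ∈ Set.Ico (0:ℝ) 1,
      L s = ∫ w in Set.Ioc s 1, (1 / w) * (1 - Real.exp (-(L (1 - w)))))
    (hL1 : L 1 = 0) :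
    eta L 0 = 0 ∧ eta L 1 = 0 ∧
      (∀ w ∈ Set.Ioo (0:ℝ) 1,
        HasDerivAt (eta L)
          (Real.exp (-(L w)) *
            (2 - (Real.exp (L (1 - w)) + Real.exp (-(L (1 - w)))))) w ∧
        Real.exp (-(L w)) *
          (2 - (Real.exp (L (1 - w)) + Real.exp (-(L (1 - w))))) ≤ 0) ∧
      (∀ w ∈ Set.Icc (0:ℝ) 1, eta L w = 0) := by
  have heta0 : eta L 0 = 0 := by norm_num [eta, hL1]
  have heta1 : eta L 1 = 0 := by norm_num [eta, hL1]
  have hderiv : ∀ w ∈ Set.Ioo (0:ℝ) 1,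
      HasDerivAt (eta L)
        (Real.exp (-(L w)) * (2 - (Real.exp (L (1 - w)) + Real.exp (-(L (1 - w)))))) w := by
    intro w hw
    exact eta_hasDeriv hmap hL hL1 w hw
  have hnonpos : ∀ w ∈ Set.Ioo (0:ℝ) 1,
      Real.exp (-(L w)) * (2 - (Real.exp (L (1 - w)) + Real.exp (-(L (1 - w))))) ≤ 0 := by
    intro w hw
    apply mul_nonpos_of_nonneg_of_nonpos (Real.exp_pos _).le
    have hab : Real.exp (L (1 - w)) * Real.exp (-(L (1 - w))) = 1 := by
      rw [← Real.exp_add, add_neg_cancel, Real.exp_zero]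
    nlinarith [Real.exp_pos (L (1 - w)), sq_nonneg (Real.exp (L (1 - w)) - 1)]
  -- continuity of eta on Icc 0 1
  have hLt1 : Tendsto L (nhdsWithin 1 (Set.Icc (0:ℝ) 1)) (nhds 0) :=
    L_tendsto_one hmap hL hL1
  have hcont : ContinuousOn (eta L) (Set.Icc 0 1) := by
    intro w hw
    rcases eq_or_lt_of_le hw.1 with h0 | h0
    · -- w = 0
      subst h0
      rw [ContinuousWithinAt, heta0]
      have hmapsto : Set.MapsTo (fun x : ℝ => 1 - x) (Set.Icc 0 1) (Set.Icc 0 1) := by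
        intro x hx
        show (1 - x) ∈ Set.Icc (0:ℝ) 1
        exact ⟨by linarith [hx.2], by linarith [hx.1]⟩
      have hsub : Tendsto (fun x : ℝ => 1 - x) (nhdsWithin 0 (Set.Icc (0:ℝ) 1))
          (nhdsWithin 1 (Set.Icc (0:ℝ) 1)) := by
        have hc : ContinuousWithinAt (fun x : ℝ => 1 - x) (Set.Icc 0 1) 0 :=
          (continuous_const.sub continuous_id).continuousWithinAt
        have := hc.tendsto_nhdsWithin hmapsto
        simpa using this
      have hterm1 : Tendsto (fun x : ℝ => (1 - x) * Real.exp (L (1 - x)))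
          (nhdsWithin 0 (Set.Icc (0:ℝ) 1)) (nhds 1) := by
        have hLcomp : Tendsto (fun x : ℝ => L (1 - x)) (nhdsWithin 0 (Set.Icc (0:ℝ) 1)) (nhds 0) :=
          hLt1.comp hsub
        have hexp : Tendsto (fun x : ℝ => Real.exp (L (1 - x)))
            (nhdsWithin 0 (Set.Icc (0:ℝ) 1)) (nhds 1) := by
          simpa [Function.comp_def] using (Real.continuous_exp.continuousAt.tendsto.comp hLcomp)
        have hl : Tendsto (fun x : ℝ => 1 - x) (nhdsWithin 0 (Set.Icc (0:ℝ) 1)) (nhds 1) := by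
          have h : Continuous (fun x : ℝ => 1 - x) := continuous_const.sub continuous_id
          have := h.tendsto (0:ℝ)
          norm_num at this
          exact this.mono_left nhdsWithin_le_nhds
        simpa using hl.mul hexp
      have hterm2 : Tendsto (fun x : ℝ => x * Real.exp (-(L x)))
          (nhdsWithin 0 (Set.Icc (0:ℝ) 1)) (nhds 0) := by
        apply squeeze_zero'
        · filter_upwards [self_mem_nhdsWithin] with x hx
          exact mul_nonneg hx.1 (Real.exp_pos _).le
        · filter_upwards [self_mem_nhdsWithin] with x hx
          calc x * Real.exp (-(L x)) ≤ x * 1 := by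
                apply mul_le_mul_of_nonneg_left _ hx.1
                exact Real.exp_le_one_iff.mpr (by linarith [(hmap x hx).1])
            _ = x := mul_one x
        · exact tendsto_id.mono_left nhdsWithin_le_nhds
      have := (hterm1.add hterm2).sub (tendsto_const_nhds : Tendsto _ _ (nhds (1:ℝ)))
      simpa [eta.eq_unfold] using this
    · rcases eq_or_lt_of_le hw.2 with h1 | h1
      · -- w = 1
        subst h1
        rw [ContinuousWithinAt, heta1]
        have hterm2 : Tendsto (fun x : ℝ => x * Real.exp (-(L x)))
            (nhdsWithin 1 (Set.Icc (0:ℝ) 1)) (nhds 1) := by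
          have hexp : Tendsto (fun x : ℝ => Real.exp (-(L x)))
              (nhdsWithin 1 (Set.Icc (0:ℝ) 1)) (nhds 1) := by
            have := Real.continuous_exp.continuousAt.tendsto.comp hLt1.neg
            simpa [Function.comp_def] using this
          have hid : Tendsto (fun x : ℝ => x) (nhdsWithin 1 (Set.Icc (0:ℝ) 1)) (nhds 1) :=
            tendsto_id.mono_left nhdsWithin_le_nhds
          simpa using hid.mul hexp
        have hterm1 : Tendsto (fun x : ℝ => (1 - x) * Real.exp (L (1 - x)))
            (nhdsWithin 1 (Set.Icc (0:ℝ) 1)) (nhds 0) := by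
          apply squeeze_zero'
          · filter_upwards [self_mem_nhdsWithin] with x hx
            exact mul_nonneg (by linarith [hx.2]) (Real.exp_pos _).le
          · filter_upwards [self_mem_nhdsWithin] with x hx
            have h1x : (1 - x) ∈ Set.Icc (0:ℝ) 1 := ⟨by linarith [hx.2], by linarith [hx.1]⟩
            calc (1 - x) * Real.exp (L (1 - x)) ≤ (1 - x) * Real.exp 1 := by
                  apply mul_le_mul_of_nonneg_left _ (by linarith [hx.2])
                  exact Real.exp_le_exp.mpr (hmap _ h1x).2
              _ = (1 - x) * Real.exp 1 := rfl
          · have : Tendsto (fun x : ℝ => (1 - x) * Real.exp 1) (nhds 1) (nhds ((1 - 1) * Real.exp 1)) := by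
              exact ((continuous_const.sub continuous_id).mul continuous_const).tendsto 1
            simpa using this.mono_left nhdsWithin_le_nhds
        have := (hterm1.add hterm2).sub (tendsto_const_nhds : Tendsto _ _ (nhds (1:ℝ)))
        simpa [eta.eq_unfold] using this
      · -- interior
        exact ((hderiv w ⟨h0, h1⟩).continuousAt).continuousWithinAt
  have hanti : AntitoneOn (eta L) (Set.Icc 0 1) := by
    apply antitoneOn_of_deriv_nonpos (convex_Icc 0 1) hcont
    · intro x hx
      rw [interior_Icc] at hx
      exact ((hderiv x hx).differentiableAt).differentiableWithinAt
    · intro x hx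
      rw [interior_Icc] at hx
      rw [(hderiv x hx).deriv]
      exact hnonpos x hx
  refine ⟨heta0, heta1, fun w hw => ⟨hderiv w hw, hnonpos w hw⟩, ?_⟩
  intro w hw
  have hle : eta L w ≤ 0 := by
    have := hanti (Set.left_mem_Icc.mpr zero_le_one) hw hw.1
    rwa [heta0] at this
  have hge : 0 ≤ eta L w := by
    have := hanti hw (Set.right_mem_Icc.mpr zero_le_one) hw.2
    rwa [heta1] at this
  linarith

end Main

/-- If `L : [0,1] → [0,1]` satisfies the integral equation with
`L(1) = 0`, then `η(0) = η(1) = 0`, `η` is differentiable on `(0,1)` with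
`η′(w) = e^{−L(w)}·[2 − (e^{L(1−w)} + e^{−L(1−w)})] ≤ 0`, and `η ≡ 0` on `[0,1]`. -/
theorem stmt11 (L : ℝ → ℝ) (hmap : ∀ s ∈ Set.Icc (0:ℝ) 1, L s ∈ Set.Icc (0:ℝ) 1)
    (hL : ∀ s ∈ Set.Ico (0:ℝ) 1,
      L s = ∫ w in Set.Ioc s 1, (1 / w) * (1 - Real.exp (-(L (1 - w)))))
    (hL1 : L 1 = 0) :
    eta L 0 = 0 ∧ eta L 1 = 0 ∧
      (∀ w ∈ Set.Ioo (0:ℝ) 1,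
        HasDerivAt (eta L)
          (Real.exp (-(L w)) *
            (2 - (Real.exp (L (1 - w)) + Real.exp (-(L (1 - w)))))) w ∧
        Real.exp (-(L w)) *
          (2 - (Real.exp (L (1 - w)) + Real.exp (-(L (1 - w))))) ≤ 0) ∧
      (∀ w ∈ Set.Icc (0:ℝ) 1, eta L w = 0) := by
  exact stmt11_aux L hmap hL hL1
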